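/- arXiv:1505.01055 — 3 statements merged into one kernel-verified Lean document; each statement's English description precedes it below -/
import Mathlib

section
/- Let p be an odd prime and let f ∈ ℤ[x] be the minimal polynomial of 2·cos(2π/p) over ℚ (which has integer coefficients). Then the reduction of f modulo p equals (x − 2)^{(p−1)/2} in 𝔽_p[x]; in particular f mod p is not separable for p ≥ 5. -/
open Polynomial Finset


lemma dickson_deg : ∀ n : ℕ, ((Polynomial.dickson 1 1 (n+1) : Polynomial ℤ).Monic ∧
    (Polynomial.dickson 1 1 (n+1) : Polynomial ℤ).natDegree = n + 1) ∧
    ((Polynomial.dickson 1 1 (n+2) : Polynomial ℤ).Monic ∧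
    (Polynomial.dickson 1 1 (n+2) : Polynomial ℤ).natDegree = n + 2) := by
  intro n
  induction n with
  | zero =>
    have h2 : (Polynomial.dickson 1 1 2 : Polynomial ℤ) = X^2 - C 2 := by
      rw [Polynomial.dickson_two]
      push_cast
      ring_nf
      norm_num [C_eq_natCast]
    constructor
    · rw [Polynomial.dickson_one]
      exact ⟨monic_X, natDegree_X⟩
    · rw [h2]
      exact ⟨monic_X_pow_sub_C 2 (by norm_num), natDegree_X_pow_sub_C⟩
  | succ n ih =>
    refine ⟨ih.2, ?_⟩
    rw [Polynomial.dickson_add_two]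
    obtain ⟨⟨m1, d1⟩, ⟨m2, d2⟩⟩ := ih
    have hXm : (X * Polynomial.dickson 1 1 (n+2) : Polynomial ℤ).Monic := monic_X.mul m2
    have hXd : (X * Polynomial.dickson 1 1 (n+2) : Polynomial ℤ).natDegree = n + 3 := by
      rw [natDegree_mul X_ne_zero m2.ne_zero, natDegree_X, d2]; omega
    have hlt : (C 1 * Polynomial.dickson 1 1 (n+1) : Polynomial ℤ).natDegree < n + 3 := by
      calc (C 1 * Polynomial.dickson 1 1 (n+1) : Polynomial ℤ).natDegree
          ≤ 0 + (n+1) := natDegree_mul_le.trans (by rw [natDegree_C, d1])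
      _ < n + 3 := by omega
    constructor
    · have hdlt : (C 1 * Polynomial.dickson 1 1 (n+1) : Polynomial ℤ).degree <
          (X * Polynomial.dickson 1 1 (n+2) : Polynomial ℤ).degree := by
        apply degree_lt_degree
        rw [hXd]; exact hlt
      have := hXm.add_of_left (q := -(C 1 * Polynomial.dickson 1 1 (n+1))) (by rwa [degree_neg])
      simpa [sub_eq_add_neg] using this
    · rw [natDegree_sub_eq_left_of_natDegree_lt (hXd ▸ hlt), hXd]

lemma X_sq_one_monic {R : Type*} [CommRing R] [Nontrivial R] :
    ((X:Polynomial R)^2 + 1).Monic ∧ ((X:Polynomial R)^2 + 1).natDegree = 2 := by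
  have h1 : ((1:Polynomial R)) = C 1 := by simp
  constructor
  · rw [h1]; exact monic_X_pow_add_C 1 two_ne_zero
  · rw [h1]; exact natDegree_X_pow_add_C

lemma phi_coeff {R : Type*} [CommRing R] [Nontrivial R] (m : ℕ) (c : Polynomial R)
    (hdeg : c.natDegree ≤ m) :
    (∑ i ∈ Finset.range (m+1), C (c.coeff i) * ((X:Polynomial R)^2+1)^i * X^(m-i)).coeff
      (m + c.natDegree) = c.leadingCoeff := by
  set d := c.natDegree with hd
  rw [finset_sum_coeff]
  rw [Finset.sum_eq_single d]
  · rw [mul_assoc, coeff_C_mul, coeff_mul_X_pow']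
    have hle : m - d ≤ m + d := by omega
    rw [if_pos hle]
    have : m + d - (m - d) = 2 * d := by omega
    rw [this]
    have hm : (((X:Polynomial R)^2+1)^d).Monic := X_sq_one_monic.1.pow d
    have hnd : (((X:Polynomial R)^2+1)^d).natDegree = 2 * d := by
      rw [X_sq_one_monic.1.natDegree_pow, X_sq_one_monic.2]; ring
    rw [← hnd, hm.coeff_natDegree, mul_one, leadingCoeff, ← hd]
  · intro i hi hne
    rcases lt_or_gt_of_ne hne with hlt | hgt
    · -- i < d : coefficient of (X^2+1)^i at d+i is zero
      rw [mul_assoc, coeff_C_mul, coeff_mul_X_pow']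
      have hile : i ≤ m := by simpa using Nat.lt_succ_iff.mp (Finset.mem_range.mp hi)
      rw [if_pos (by omega : m - i ≤ m + d)]
      have : m + d - (m - i) = d + i := by omega
      rw [this]
      have hnd : (((X:Polynomial R)^2+1)^i).natDegree = 2 * i := by
        rw [X_sq_one_monic.1.natDegree_pow, X_sq_one_monic.2]; ring
      have hz : (((X:Polynomial R)^2+1)^i).coeff (d+i) = 0 :=
        coeff_eq_zero_of_natDegree_lt (by omega)
      rw [hz, mul_zero]
    · -- i > d : coefficient of c at i is zero
      rw [coeff_eq_zero_of_natDegree_lt (by omega : c.natDegree < i)]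
      simp
  · intro hnot
    exact absurd (Finset.mem_range.mpr (by omega)) hnot

lemma phi_natDegree_le {R : Type*} [CommRing R] (m : ℕ) (c : Polynomial R) :
    (∑ i ∈ Finset.range (m+1), C (c.coeff i) * ((X:Polynomial R)^2+1)^i * X^(m-i)).natDegree
      ≤ m + m := by
  apply natDegree_sum_le_of_forall_le
  intro i hi
  have hile : i ≤ m := Nat.lt_succ_iff.mp (Finset.mem_range.mp hi)
  have h21 : (((X:Polynomial R)^2+1)).natDegree ≤ 2 :=
    (natDegree_add_le _ _).trans (max_le (natDegree_X_pow_le 2) (by simp))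
  have hpow : ((((X:Polynomial R)^2+1))^i).natDegree ≤ 2 * i := by
    refine natDegree_pow_le.trans ?_
    calc i * (((X:Polynomial R)^2+1)).natDegree ≤ i * 2 := by gcongr
    _ = 2 * i := by ring
  calc (C (c.coeff i) * ((X:Polynomial R)^2+1)^i * X^(m-i)).natDegree
      ≤ (C (c.coeff i) * ((X:Polynomial R)^2+1)^i).natDegree + (m - i) :=
        natDegree_mul_le.trans (by gcongr; exact natDegree_X_pow_le _)
    _ ≤ (0 + 2 * i) + (m - i) := by
        gcongr
        exact natDegree_mul_le.trans (by rw [natDegree_C]; gcongr)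
    _ ≤ m + m := by omega

lemma phi_ne_zero {R : Type*} [CommRing R] [Nontrivial R] (m : ℕ) (c : Polynomial R)
    (hc : c ≠ 0) (hdeg : c.natDegree ≤ m) :
    (∑ i ∈ Finset.range (m+1), C (c.coeff i) * ((X:Polynomial R)^2+1)^i * X^(m-i)) ≠ 0 := by
  intro h
  have := phi_coeff m c hdeg
  rw [h] at this
  simp only [coeff_zero] at this
  exact hc (leadingCoeff_eq_zero.mp this.symm)

lemma zeta_sum_zero {p m : ℕ} (hm : p = 2*m+1) (hp1 : 1 < p) {ζ : ℂ}
    (hζ : IsPrimitiveRoot ζ p) :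
    (1 : ℂ) + ∑ k ∈ Finset.range m, (ζ^(k+1) + (ζ⁻¹)^(k+1)) = 0 := by
  have hζp : ζ ^ p = 1 := hζ.pow_eq_one
  have key : ∑ i ∈ Finset.range p, ζ^i = 0 := hζ.geom_sum_eq_zero hp1
  rw [hm, Finset.sum_range_succ' (fun i => ζ^i) (2*m)] at key
  have hsplit : ∑ i ∈ Finset.range (2*m), ζ^(i+1)
      = ∑ i ∈ Finset.range m, ζ^(i+1) + ∑ i ∈ Finset.range m, ζ^(m+i+1) := by
    rw [two_mul, Finset.sum_range_add]
  have hrefl : ∑ i ∈ Finset.range m, ζ^(m+i+1) = ∑ k ∈ Finset.range m, (ζ⁻¹)^(k+1) := by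
    rw [← Finset.sum_range_reflect (fun i => ζ^(m+i+1)) m]
    apply Finset.sum_congr rfl
    intro k hk
    have hkm : k < m := Finset.mem_range.mp hk
    have h2 : m + (m - 1 - k) + 1 = 2*m - k := by omega
    rw [h2, inv_pow]
    apply eq_inv_of_mul_eq_one_left
    rw [← pow_add]
    have h3 : 2*m - k + (k+1) = p := by omega
    rw [h3, hζp]
  rw [Finset.sum_add_distrib, ← hrefl]
  simp only [pow_zero] at key
  rw [hsplit] at key
  linear_combination key

lemma pow_expand {K : Type*} [CommRing K] (m : ℕ) :
    ((X : Polynomial K) - 1)^(2*m) =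
      ∑ j ∈ Finset.range (m+1),
        C ((((X : Polynomial K) - 2)^m).coeff j) * ((X:Polynomial K)^2+1)^j * X^(m-j) := by
  have hC2 : (C (-2) : Polynomial K) = -2 := by rw [map_neg, map_ofNat]
  have h1 : ((X:Polynomial K) - 1)^(2*m) = (((X:Polynomial K)^2+1) + C (-2) * X)^m := by
    rw [two_mul, pow_add, ← mul_pow]
    congr 1
    rw [hC2]; ring
  have h2 : ((X : Polynomial K) - 2)^m = ((X : Polynomial K) + C (-2))^m := by
    rw [hC2]; ring
  rw [h1, add_pow]
  apply Finset.sum_congr rfl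
  intro j hj
  rw [h2, coeff_X_add_C_pow, mul_pow, C_mul, C_pow, C_eq_natCast]
  ring


lemma cyclo_mod (p : ℕ) [Fact p.Prime] :
    cyclotomic p (ZMod p) = ((X : Polynomial (ZMod p)) - 1)^(p-1) := by
  have hp1 : 1 < p := (Fact.out : p.Prime).one_lt
  have h1 : cyclotomic p (ZMod p) * (X - 1) = X^p - 1 :=
    cyclotomic_prime_mul_X_sub_one (ZMod p) p
  have h2 : ((X : Polynomial (ZMod p)) - 1)^p = X^p - 1 := by
    rw [sub_pow_char, one_pow]
  have h3 : cyclotomic p (ZMod p) * (X - 1) = (X-1)^(p-1) * (X-1) := by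
    rw [h1, ← h2, ← pow_succ]
    congr 1
    omega
  have hX1 : ((X : Polynomial (ZMod p)) - 1) ≠ 0 := by
    have : ((1 : Polynomial (ZMod p))) = C 1 := by simp
    rw [this]
    exact X_sub_C_ne_zero 1
  exact mul_right_cancel₀ hX1 h3

theorem stmt5 (p : ℕ) (hp : p.Prime) (hodd : Odd p)
    (f : Polynomial ℤ) (hmonic : f.Monic)
    (hf : f.map (Int.castRingHom ℚ) = minpoly ℚ (2 * Complex.cos (2 * Real.pi / p))) :
    f.map (Int.castRingHom (ZMod p)) = (Polynomial.X - 2) ^ ((p - 1) / 2) ∧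
    (5 ≤ p → ¬ (f.map (Int.castRingHom (ZMod p))).Separable) := by
  classical
  haveI : Fact p.Prime := ⟨hp⟩
  have hp1 : 1 < p := hp.one_lt
  obtain ⟨m, hm⟩ : ∃ m, p = 2*m+1 := by
    obtain ⟨k, hk⟩ := hodd; exact ⟨k, by omega⟩
  have hp2 : p ≠ 2 := by omega
  have hm1 : 1 ≤ m := by
    rcases Nat.eq_zero_or_pos m with h0 | h; · omega
    · exact h
  have hm2 : (p-1)/2 = m := by omega
  set α : ℂ := 2 * Complex.cos (2 * Real.pi / p) with hα
  set ζ : ℂ := Complex.exp ((2 * (Real.pi:ℂ) / (p:ℂ)) * Complex.I) with hζdef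
  have hζprim : IsPrimitiveRoot ζ p := by
    have := Complex.isPrimitiveRoot_exp p (by omega)
    have harg : 2 * (Real.pi:ℂ) * Complex.I / (p:ℂ) = (2 * (Real.pi:ℂ) / (p:ℂ)) * Complex.I := by
      ring
    rwa [harg] at this
  have hζ0 : ζ ≠ 0 := Complex.exp_ne_zero _
  have hζinv : ζ * ζ⁻¹ = 1 := mul_inv_cancel₀ hζ0
  have hαζ : α = ζ + ζ⁻¹ := by
    rw [hα, Complex.cos, hζdef, ← Complex.exp_neg]
    ring
  -- aeval α f = 0
  have hAint : algebraMap ℤ ℚ = Int.castRingHom ℚ := rfl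
  have hαf : (Polynomial.aeval α) f = 0 := by
    have h0 : (Polynomial.aeval α) (f.map (Int.castRingHom ℚ)) = 0 := by
      rw [hf]; exact minpoly.aeval ℚ α
    rwa [← hAint, aeval_map_algebraMap] at h0
  -- the witness g for the upper bound
  set g : Polynomial ℤ := C 1 + ∑ k ∈ Finset.range m, Polynomial.dickson 1 1 (k+1) with hgdef
  have hdick : ∀ k, (Polynomial.dickson 1 1 (k+1) : Polynomial ℤ).Monic ∧
      (Polynomial.dickson 1 1 (k+1) : Polynomial ℤ).natDegree = k + 1 := fun k => (dickson_deg k).1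
  have hg0 : (Polynomial.aeval α) g = 0 := by
    rw [hgdef, map_add, map_sum, aeval_C]
    have hterm : ∀ k, (Polynomial.aeval α) (Polynomial.dickson 1 1 (k+1) : Polynomial ℤ)
        = ζ^(k+1) + (ζ⁻¹)^(k+1) := by
      intro k
      rw [Polynomial.aeval_def, ← Polynomial.eval_map, Polynomial.map_dickson]
      rw [hαζ]
      have h11 : ((algebraMap ℤ ℂ) 1) = 1 := map_one _
      rw [h11]
      exact Polynomial.dickson_one_one_eval_add_inv ζ ζ⁻¹ hζinv (k+1)
    rw [Finset.sum_congr rfl (fun k _ => hterm k)]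
    have := zeta_sum_zero hm hp1 hζprim
    simpa using this
  have hgcoeffm : g.coeff m = 1 := by
    rw [hgdef, coeff_add, coeff_C, if_neg (by omega), finset_sum_coeff]
    rw [Finset.sum_eq_single (m-1)]
    · have hnd : (Polynomial.dickson 1 1 (m-1+1) : Polynomial ℤ).natDegree = m := by
        rw [(hdick (m-1)).2]; omega
      have hcn := (hdick (m-1)).1.coeff_natDegree
      rw [hnd] at hcn
      rw [show m - 1 + 1 = m from by omega] at hcn ⊢
      simpa using hcn
    · intro k hk hne
      have hkm : k < m := Finset.mem_range.mp hk
      have hklt : k + 1 < m := by omega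
      exact coeff_eq_zero_of_natDegree_lt (by rw [(hdick k).2]; omega)
    · intro hnot
      exact absurd (Finset.mem_range.mpr (by omega)) hnot
  have hgne : g ≠ 0 := fun h => by simp [h] at hgcoeffm
  have hgdeg : g.natDegree ≤ m := by
    rw [hgdef]
    refine (natDegree_add_le _ _).trans (max_le (by simp) ?_)
    apply natDegree_sum_le_of_forall_le
    intro k hk
    rw [(hdick k).2]
    exact Nat.succ_le_of_lt (Finset.mem_range.mp hk)
  set n := f.natDegree with hn
  have hn_le : n ≤ m := by
    have h1 : (f.map (Int.castRingHom ℚ)).natDegree = n := hmonic.natDegree_map _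
    have h2 : minpoly ℚ α ∣ g.map (Int.castRingHom ℚ) := by
      apply minpoly.dvd
      rw [← hAint, aeval_map_algebraMap]
      exact hg0
    have h3 : g.map (Int.castRingHom ℚ) ≠ 0 :=
      (Polynomial.map_ne_zero_iff (Int.cast_injective)).mpr hgne
    have h4 : (g.map (Int.castRingHom ℚ)).natDegree ≤ m := by
      rw [natDegree_map_eq_of_injective Int.cast_injective]
      exact hgdeg
    have := natDegree_le_of_dvd h2 h3
    rw [← hf] at this
    omega
  -- the polynomial h and the lower bound
  set h : Polynomial ℤ :=
    ∑ i ∈ Finset.range (n+1), C (f.coeff i) * ((X:Polynomial ℤ)^2+1)^i * X^(n-i) with hhdef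
  have hhζ : (Polynomial.aeval ζ) h = 0 := by
    rw [hhdef, map_sum]
    have hterm : ∀ i ∈ Finset.range (n+1),
        (Polynomial.aeval ζ) (C (f.coeff i) * ((X:Polynomial ℤ)^2+1)^i * X^(n-i))
        = ζ^n * ((f.coeff i : ℂ) * (ζ + ζ⁻¹)^i) := by
      intro i hi
      have hin : i ≤ n := Nat.lt_succ_iff.mp (Finset.mem_range.mp hi)
      rw [map_mul, map_mul, map_pow, map_pow, aeval_C, map_add, map_one, map_pow, aeval_X]
      have hz2 : (ζ^2 + 1) = ζ * (ζ + ζ⁻¹) := by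
        rw [mul_add, hζinv]; ring
      rw [hz2, mul_pow]
      have : ζ^i * ζ^(n-i) = ζ^n := by rw [← pow_add]; congr 1; omega
      calc (f.coeff i : ℂ) * (ζ^i * (ζ + ζ⁻¹)^i) * ζ^(n-i)
          = (f.coeff i : ℂ) * (ζ + ζ⁻¹)^i * (ζ^i * ζ^(n-i)) := by ring
        _ = ζ^n * ((f.coeff i : ℂ) * (ζ + ζ⁻¹)^i) := by rw [this]; ring
    rw [Finset.sum_congr rfl hterm, ← Finset.mul_sum]
    have hsum : ∑ i ∈ Finset.range (n+1), (f.coeff i : ℂ) * (ζ + ζ⁻¹)^i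
        = (Polynomial.aeval α) f := by
      rw [Polynomial.aeval_eq_sum_range, hαζ]
      apply Finset.sum_congr rfl
      intro i _
      rw [zsmul_eq_mul]
    rw [hsum, hαf, mul_zero]
  have hhcoeff : h.coeff (n + n) = 1 := by
    have := phi_coeff n f le_rfl
    rw [hmonic.leadingCoeff] at this
    exact this
  have hhne : h ≠ 0 := fun hz => by simp [hz] at hhcoeff
  have hhdegle : h.natDegree ≤ n + n := phi_natDegree_le n f
  have hcyc_dvd : cyclotomic p ℤ ∣ h := by
    rw [← Polynomial.map_dvd_map (Int.castRingHom ℚ) Int.cast_injective (cyclotomic.monic p ℤ)]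
    rw [map_cyclotomic, cyclotomic_eq_minpoly_rat hζprim hp.pos]
    apply minpoly.dvd
    rw [← hAint, aeval_map_algebraMap]
    exact hhζ
  have hlb : p - 1 ≤ n + n := by
    have h1 : (cyclotomic p ℤ).natDegree = p - 1 := by
      rw [natDegree_cyclotomic, Nat.totient_prime hp]
    have := natDegree_le_of_dvd hcyc_dvd hhne
    omega
  have hnm : n = m := by omega
  -- h is monic of degree exactly n + n = p - 1
  have hhdeg : h.natDegree = n + n :=
    le_antisymm hhdegle (le_natDegree_of_ne_zero (by rw [hhcoeff]; exact one_ne_zero))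
  have hhmonic : h.Monic := by
    rw [Polynomial.Monic, Polynomial.leadingCoeff, hhdeg]
    exact hhcoeff
  -- h = cyclotomic p ℤ
  obtain ⟨c, hc⟩ := hcyc_dvd
  have hcne : c ≠ 0 := by
    rintro rfl
    rw [mul_zero] at hc
    exact hhne hc
  have hcyne : cyclotomic p ℤ ≠ 0 := (cyclotomic.monic p ℤ).ne_zero
  have hcdeg : c.natDegree = 0 := by
    have := natDegree_mul hcyne hcne
    rw [← hc, hhdeg, natDegree_cyclotomic, Nat.totient_prime hp] at this
    omega
  have hc1 : c = 1 := by
    have hlc : h.leadingCoeff = (cyclotomic p ℤ).leadingCoeff * c.leadingCoeff := by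
      rw [hc, leadingCoeff_mul]
    rw [hhmonic.leadingCoeff, (cyclotomic.monic p ℤ).leadingCoeff, one_mul] at hlc
    obtain ⟨a, ha⟩ := Polynomial.natDegree_eq_zero.mp hcdeg
    rw [← ha, leadingCoeff_C] at hlc
    rw [← ha, ← hlc, map_one]
  rw [hc1, mul_one] at hc
  -- reduce mod p
  set F := f.map (Int.castRingHom (ZMod p)) with hF
  have hmapsum : h.map (Int.castRingHom (ZMod p))
      = ∑ i ∈ Finset.range (m+1), C (F.coeff i) * ((X:Polynomial (ZMod p))^2+1)^i * X^(m-i) := by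
    rw [hhdef, Polynomial.map_sum]
    rw [hnm]
    apply Finset.sum_congr rfl
    intro i _
    rw [Polynomial.map_mul, Polynomial.map_mul, Polynomial.map_pow, Polynomial.map_pow,
      Polynomial.map_add, Polynomial.map_one, Polynomial.map_pow, Polynomial.map_X, map_C,
      coeff_map]
  have hmapcyc : h.map (Int.castRingHom (ZMod p)) = ((X:Polynomial (ZMod p)) - 1)^(2*m) := by
    rw [hc, map_cyclotomic, cyclo_mod p]
    congr 1
    omega
  -- conclude F = (X - 2)^m
  have hFdeg : F.natDegree ≤ m := by
    rw [hF, hmonic.natDegree_map]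
    omega
  have hXm2deg : (((X:Polynomial (ZMod p)) - 2)^m).natDegree ≤ m := by
    refine natDegree_pow_le.trans ?_
    have : ((X:Polynomial (ZMod p)) - 2).natDegree ≤ 1 :=
      (natDegree_sub_le _ _).trans (by simp)
    calc m * ((X:Polynomial (ZMod p)) - 2).natDegree ≤ m * 1 := by gcongr
      _ = m := mul_one m
  have hDzero : F - ((X:Polynomial (ZMod p)) - 2)^m = 0 := by
    by_contra hD
    apply phi_ne_zero m (F - ((X:Polynomial (ZMod p)) - 2)^m) hD
      ((natDegree_sub_le _ _).trans (max_le hFdeg hXm2deg))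
    have hsplitsum : ∑ i ∈ Finset.range (m+1),
        C ((F - ((X:Polynomial (ZMod p)) - 2)^m).coeff i) * ((X:Polynomial (ZMod p))^2+1)^i * X^(m-i)
        = (∑ i ∈ Finset.range (m+1), C (F.coeff i) * ((X:Polynomial (ZMod p))^2+1)^i * X^(m-i))
          - ∑ i ∈ Finset.range (m+1),
            C ((((X:Polynomial (ZMod p)) - 2)^m).coeff i) * ((X:Polynomial (ZMod p))^2+1)^i * X^(m-i) := by
      rw [← Finset.sum_sub_distrib]
      apply Finset.sum_congr rfl
      intro i _
      rw [coeff_sub, map_sub]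
      ring
    rw [hsplitsum, ← hmapsum, hmapcyc, ← pow_expand, sub_self]
  have hFeq : F = ((X:Polynomial (ZMod p)) - 2)^m := sub_eq_zero.mp hDzero
  constructor
  · rw [hm2]; exact hFeq
  · intro hp5 hsep
    have hm2' : 2 ≤ m := by omega
    have hsq : Squarefree F := hsep.squarefree
    have hdvd : ((X:Polynomial (ZMod p)) - 2) * ((X:Polynomial (ZMod p)) - 2) ∣ F := by
      rw [hFeq, ← pow_two]
      exact pow_dvd_pow _ hm2'
    have hunit : IsUnit ((X:Polynomial (ZMod p)) - 2) := hsq _ hdvd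
    have : ((2 : Polynomial (ZMod p))) = C 2 := by rw [map_ofNat]
    rw [this] at hunit
    exact Polynomial.not_isUnit_X_sub_C _ hunit
end

section
/- For every (x, y, z) ∈ ℂ³ satisfying x² + y² + z² − xyz − 4 = 0, there exist nonzero complex numbers a, b with x = a + a⁻¹, y = b + b⁻¹, and z = ab + (ab)⁻¹. -/
theorem stmt8 (x y z : ℂ) (h : x ^ 2 + y ^ 2 + z ^ 2 - x * y * z - 4 = 0) :
    ∃ a b : ℂ, a ≠ 0 ∧ b ≠ 0 ∧ x = a + a⁻¹ ∧ y = b + b⁻¹ ∧ z = a * b + (a * b)⁻¹ := by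
  obtain ⟨s, hs⟩ : ∃ s : ℂ, s ^ 2 = x ^ 2 - 4 :=
    IsAlgClosed.exists_pow_nat_eq (x ^ 2 - 4) (two_pos)
  obtain ⟨t, ht⟩ : ∃ t : ℂ, t ^ 2 = y ^ 2 - 4 :=
    IsAlgClosed.exists_pow_nat_eq (y ^ 2 - 4) (two_pos)
  set a := (x + s) / 2 with ha
  set b := (y + t) / 2 with hb
  have ha1 : a * ((x - s) / 2) = 1 := by
    rw [ha]; field_simp; linear_combination -hs
  have hb1 : b * ((y - t) / 2) = 1 := by
    rw [hb]; field_simp; linear_combination -ht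
  have haz : a ≠ 0 := left_ne_zero_of_mul_eq_one ha1
  have hbz : b ≠ 0 := left_ne_zero_of_mul_eq_one hb1
  have hai : a⁻¹ = (x - s) / 2 := (eq_inv_of_mul_eq_one_right ha1).symm
  have hbi : b⁻¹ = (y - t) / 2 := (eq_inv_of_mul_eq_one_right hb1).symm
  have hx : x = a + a⁻¹ := by rw [hai, ha]; ring
  have hy : y = b + b⁻¹ := by rw [hbi, hb]; ring
  clear_value a b
  clear ha hb ha1 hb1 hai hbi hs ht
  have hau : a * a⁻¹ = 1 := mul_inv_cancel₀ haz
  have hbv : b * b⁻¹ = 1 := mul_inv_cancel₀ hbz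
  rw [hx, hy] at h
  have key : (z - (a * b + (a * b)⁻¹)) * (z - (a * b⁻¹ + (a * b⁻¹)⁻¹)) = 0 := by
    rw [mul_inv, mul_inv, inv_inv]
    linear_combination h + (b ^ 2 + (b⁻¹) ^ 2 - 2) * hau + (a ^ 2 + (a⁻¹) ^ 2 - 2) * hbv
  rcases mul_eq_zero.mp key with hk | hk
  · exact ⟨a, b, haz, hbz, hx, hy, sub_eq_zero.mp hk⟩
  · refine ⟨a, b⁻¹, haz, inv_ne_zero hbz, hx, ?_, sub_eq_zero.mp hk⟩
    rw [inv_inv, hy, add_comm]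
end

section
/- Let X, Y ∈ SL₂(ℂ) and set w = Y X⁻¹ Y X Y⁻¹ X Y X⁻¹ Y. If X w = w X and the pair (X, Y) generates an irreducible subgroup (no common eigenvector), then with α = tr(X), β = tr(Y), γ = tr(X⁻¹Y), the equation −γ⁴ + αβγ³ − (α² + β² − 3)γ² + αβγ − 1 = 0 holds. -/
private lemma funext2 {u u' : Fin 2 → ℂ} (h0 : u 0 = u' 0) (h1 : u 1 = u' 1) : u = u' := by
  funext k; fin_cases k <;> assumption

theorem stmt14 (X Y : Matrix.SpecialLinearGroup (Fin 2) ℂ)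
    (w : Matrix.SpecialLinearGroup (Fin 2) ℂ)
    (hw : w = Y * X⁻¹ * Y * X * Y⁻¹ * X * Y * X⁻¹ * Y)
    (hcomm : X * w = w * X)
    (hirr : ¬ ∃ v : Fin 2 → ℂ, v ≠ 0 ∧
      (∃ c : ℂ, Matrix.mulVec (X : Matrix (Fin 2) (Fin 2) ℂ) v = c • v) ∧
      (∃ c : ℂ, Matrix.mulVec (Y : Matrix (Fin 2) (Fin 2) ℂ) v = c • v))
    (α β γ : ℂ)
    (hα : α = Matrix.trace (X : Matrix (Fin 2) (Fin 2) ℂ))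
    (hβ : β = Matrix.trace (Y : Matrix (Fin 2) (Fin 2) ℂ))
    (hγ : γ = Matrix.trace ((X⁻¹ * Y : Matrix.SpecialLinearGroup (Fin 2) ℂ) : Matrix (Fin 2) (Fin 2) ℂ)) :
    -γ ^ 4 + α * β * γ ^ 3 - (α ^ 2 + β ^ 2 - 3) * γ ^ 2 + α * β * γ - 1 = 0 := by
  -- eigenvectors
  obtain ⟨a0, ha0⟩ := Module.End.exists_eigenvalue
    (Matrix.toLin' (X : Matrix (Fin 2) (Fin 2) ℂ))
  obtain ⟨v1, hv1⟩ := ha0.exists_hasEigenvector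
  obtain ⟨b0, hb0⟩ := Module.End.exists_eigenvalue
    (Matrix.toLin' (Y : Matrix (Fin 2) (Fin 2) ℂ))
  obtain ⟨v2, hv2⟩ := hb0.exists_hasEigenvector
  have hv1ne : v1 ≠ 0 := hv1.2
  have hv2ne : v2 ≠ 0 := hv2.2
  have hAv1 : Matrix.mulVec (X : Matrix (Fin 2) (Fin 2) ℂ) v1 = a0 • v1 := by
    have := hv1.apply_eq_smul; rwa [Matrix.toLin'_apply] at this
  have hBv2 : Matrix.mulVec (Y : Matrix (Fin 2) (Fin 2) ℂ) v2 = b0 • v2 := by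
    have := hv2.apply_eq_smul; rwa [Matrix.toLin'_apply] at this
  -- no proportionality between v1 and v2
  have hdep12 : ∀ c : ℂ, v2 ≠ c • v1 := by
    intro c hc
    have hcne : c ≠ 0 := by
      rintro rfl; rw [zero_smul] at hc; exact hv2ne hc
    refine hirr ⟨v1, hv1ne, ⟨a0, hAv1⟩, ⟨b0, ?_⟩⟩
    have h1 : Matrix.mulVec (Y : Matrix (Fin 2) (Fin 2) ℂ) (c • v1) = b0 • (c • v1) := by
      rw [← hc]; exact hBv2
    rw [Matrix.mulVec_smul, smul_comm b0 c] at h1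
    exact smul_right_injective _ hcne h1
  have hdep21 : ∀ c : ℂ, v1 ≠ c • v2 := by
    intro c hc
    have hcne : c ≠ 0 := by
      rintro rfl; rw [zero_smul] at hc; exact hv1ne hc
    refine hirr ⟨v2, hv2ne, ⟨a0, ?_⟩, ⟨b0, hBv2⟩⟩
    have h1 : Matrix.mulVec (X : Matrix (Fin 2) (Fin 2) ℂ) (c • v2) = a0 • (c • v2) := by
      rw [← hc]; exact hAv1
    rw [Matrix.mulVec_smul, smul_comm a0 c] at h1
    exact smul_right_injective _ hcne h1
  -- change-of-basis matrix
  set g : Matrix (Fin 2) (Fin 2) ℂ := !![v1 0, v2 0; v1 1, v2 1] with hgdef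
  have hg0 : ∀ k, g k 0 = v1 k := by intro k; fin_cases k <;> simp [hgdef]
  have hg1 : ∀ k, g k 1 = v2 k := by intro k; fin_cases k <;> simp [hgdef]
  have hdetgne : g.det ≠ 0 := by
    rw [hgdef, Matrix.det_fin_two_of]
    intro h0
    by_cases h1 : v1 0 = 0
    · have h2 : v1 1 ≠ 0 := by
        intro h2
        exact hv1ne (funext2 (by simp [h1]) (by simp [h2]))
      have h3 : v2 0 = 0 := by
        have h4 : v2 0 * v1 1 = 0 := by linear_combination v2 1 * h1 - h0
        rcases mul_eq_zero.mp h4 with h | h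
        · exact h
        · exact absurd h h2
      apply hdep12 (v2 1 / v1 1)
      apply funext2 <;> simp only [Pi.smul_apply, smul_eq_mul]
      · rw [h1, h3]; ring
      · field_simp
    · apply hdep12 (v2 0 / v1 0)
      apply funext2 <;> simp only [Pi.smul_apply, smul_eq_mul]
      · field_simp
      · field_simp
        linear_combination h0
  have hu : IsUnit g.det := isUnit_iff_ne_zero.mpr hdetgne
  have hgh : g * g⁻¹ = 1 := Matrix.mul_nonsing_inv g hu
  have hhg : g⁻¹ * g = 1 := Matrix.nonsing_inv_mul g hu
  -- conjugation is multiplicative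
  have hkey : ∀ P Q : Matrix (Fin 2) (Fin 2) ℂ,
      (g⁻¹ * P * g) * (g⁻¹ * Q * g) = g⁻¹ * (P * Q) * g := by
    intro P Q
    calc (g⁻¹ * P * g) * (g⁻¹ * Q * g) = g⁻¹ * (P * ((g * g⁻¹) * (Q * g))) := by
          simp only [Matrix.mul_assoc]
      _ = g⁻¹ * (P * Q) * g := by rw [hgh]; simp only [Matrix.one_mul, Matrix.mul_assoc]
  -- conjugated matrices
  set A' : Matrix (Fin 2) (Fin 2) ℂ := g⁻¹ * (X : Matrix (Fin 2) (Fin 2) ℂ) * g with hA'def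
  set B' : Matrix (Fin 2) (Fin 2) ℂ := g⁻¹ * (Y : Matrix (Fin 2) (Fin 2) ℂ) * g with hB'def
  set Ai' : Matrix (Fin 2) (Fin 2) ℂ :=
    g⁻¹ * ((X⁻¹ : Matrix.SpecialLinearGroup (Fin 2) ℂ) : Matrix (Fin 2) (Fin 2) ℂ) * g with hAi'def
  set Bi' : Matrix (Fin 2) (Fin 2) ℂ :=
    g⁻¹ * ((Y⁻¹ : Matrix.SpecialLinearGroup (Fin 2) ℂ) : Matrix (Fin 2) (Fin 2) ℂ) * g with hBi'def
  set Wc : Matrix (Fin 2) (Fin 2) ℂ := g⁻¹ * (w : Matrix (Fin 2) (Fin 2) ℂ) * g with hWcdef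
  -- scalar entries
  obtain ⟨aa, xx, zz, a2, hA'eta⟩ : ∃ aa xx zz a2 : ℂ, A' = !![aa, xx; zz, a2] :=
    ⟨_, _, _, _, Matrix.eta_fin_two A'⟩
  obtain ⟨pp, yy, qq, rr, hB'eta⟩ : ∃ pp yy qq rr : ℂ, B' = !![pp, yy; qq, rr] :=
    ⟨_, _, _, _, Matrix.eta_fin_two B'⟩
  -- column relations
  have hAg : (X : Matrix (Fin 2) (Fin 2) ℂ) * g = g * A' := by
    rw [hA'def, ← Matrix.mul_assoc, ← Matrix.mul_assoc, hgh, Matrix.one_mul]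
  have hBg : (Y : Matrix (Fin 2) (Fin 2) ℂ) * g = g * B' := by
    rw [hB'def, ← Matrix.mul_assoc, ← Matrix.mul_assoc, hgh, Matrix.one_mul]
  have hmv : ∀ (M : Matrix (Fin 2) (Fin 2) ℂ) (v : Fin 2 → ℂ) (i : Fin 2),
      M.mulVec v i = M i 0 * v 0 + M i 1 * v 1 := by
    intro M v i
    simp [Matrix.mulVec, dotProduct, Fin.sum_univ_two]
  have hXcol0 : ∀ i, a0 * v1 i = v1 i * aa + v2 i * zz := by
    intro i
    have h1 := congrFun (congrFun hAg i) 0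
    simp only [Matrix.mul_apply, Fin.sum_univ_two, hg0, hg1, hA'eta,
      Matrix.of_apply, Fin.isValue, Matrix.cons_val', Matrix.cons_val_zero, Matrix.cons_val_one, Matrix.head_cons,
      Matrix.empty_val', Matrix.cons_val_fin_one, Matrix.head_fin_const] at h1
    have h2 := congrFun hAv1 i
    rw [hmv] at h2
    simp only [Pi.smul_apply, smul_eq_mul] at h2
    linear_combination h1 - h2
  have hXcol1 : ∀ i, Matrix.mulVec (X : Matrix (Fin 2) (Fin 2) ℂ) v2 i = v1 i * xx + v2 i * a2 := by
    intro i
    have h1 := congrFun (congrFun hAg i) 1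
    simp only [Matrix.mul_apply, Fin.sum_univ_two, hg0, hg1, hA'eta,
      Matrix.of_apply, Fin.isValue, Matrix.cons_val', Matrix.cons_val_zero, Matrix.cons_val_one, Matrix.head_cons,
      Matrix.empty_val', Matrix.cons_val_fin_one, Matrix.head_fin_const] at h1
    rw [hmv]
    linear_combination h1
  have hYcol0 : ∀ i, Matrix.mulVec (Y : Matrix (Fin 2) (Fin 2) ℂ) v1 i = v1 i * pp + v2 i * qq := by
    intro i
    have h1 := congrFun (congrFun hBg i) 0
    simp only [Matrix.mul_apply, Fin.sum_univ_two, hg0, hg1, hB'eta,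
      Matrix.of_apply, Fin.isValue, Matrix.cons_val', Matrix.cons_val_zero, Matrix.cons_val_one, Matrix.head_cons,
      Matrix.empty_val', Matrix.cons_val_fin_one, Matrix.head_fin_const] at h1
    rw [hmv]
    linear_combination h1
  have hYcol1 : ∀ i, b0 * v2 i = v1 i * yy + v2 i * rr := by
    intro i
    have h1 := congrFun (congrFun hBg i) 1
    simp only [Matrix.mul_apply, Fin.sum_univ_two, hg0, hg1, hB'eta,
      Matrix.of_apply, Fin.isValue, Matrix.cons_val', Matrix.cons_val_zero, Matrix.cons_val_one, Matrix.head_cons,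
      Matrix.empty_val', Matrix.cons_val_fin_one, Matrix.head_fin_const] at h1
    have h2 := congrFun hBv2 i
    rw [hmv] at h2
    simp only [Pi.smul_apply, smul_eq_mul] at h2
    linear_combination h1 - h2
  -- lower-left of A' vanishes
  have hzz : zz = 0 := by
    by_contra hz
    apply hdep12 ((a0 - aa) / zz)
    apply funext2 <;> simp only [Pi.smul_apply, smul_eq_mul] <;> field_simp
    · linear_combination -hXcol0 0
    · linear_combination -hXcol0 1
  -- upper-right of B' vanishes
  have hyy : yy = 0 := by
    by_contra hy
    apply hdep21 ((b0 - rr) / yy)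
    apply funext2 <;> simp only [Pi.smul_apply, smul_eq_mul] <;> field_simp
    · linear_combination -hYcol1 0
    · linear_combination -hYcol1 1
  -- xx ≠ 0
  have hxx : xx ≠ 0 := by
    intro hx0
    refine hirr ⟨v2, hv2ne, ⟨a2, ?_⟩, ⟨b0, hBv2⟩⟩
    apply funext2 <;> simp only [Pi.smul_apply, smul_eq_mul]
    · have e := hXcol1 0; rw [hx0] at e; linear_combination e
    · have e := hXcol1 1; rw [hx0] at e; linear_combination e
  -- qq ≠ 0
  have hqq : qq ≠ 0 := by
    intro hq0
    refine hirr ⟨v1, hv1ne, ⟨a0, hAv1⟩, ⟨pp, ?_⟩⟩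
    apply funext2 <;> simp only [Pi.smul_apply, smul_eq_mul]
    · have e := hYcol0 0; rw [hq0] at e; linear_combination e
    · have e := hYcol0 1; rw [hq0] at e; linear_combination e
  -- determinants
  have hdinv : g⁻¹.det * g.det = 1 := by
    rw [← Matrix.det_mul, hhg, Matrix.det_one]
  have hdetA' : A'.det = 1 := by
    rw [hA'def, Matrix.det_mul, Matrix.det_mul, X.prop]
    linear_combination hdinv
  have hdetB' : B'.det = 1 := by
    rw [hB'def, Matrix.det_mul, Matrix.det_mul, Y.prop]
    linear_combination hdinv
  have haa2 : aa * a2 = 1 := by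
    rw [hA'eta, Matrix.det_fin_two_of] at hdetA'
    linear_combination hdetA' + xx * hzz
  have hpr : pp * rr = 1 := by
    rw [hB'eta, Matrix.det_fin_two_of] at hdetB'
    linear_combination hdetB' + qq * hyy
  -- clean matrix forms
  have hA'm : A' = !![aa, xx; 0, a2] := by rw [hA'eta, hzz]
  have hB'm : B' = !![pp, 0; qq, rr] := by rw [hB'eta, hyy]
  -- inverses of SL2 elements, conjugated
  have hXXi : (X : Matrix (Fin 2) (Fin 2) ℂ) *
      ((X⁻¹ : Matrix.SpecialLinearGroup (Fin 2) ℂ) : Matrix (Fin 2) (Fin 2) ℂ) = 1 := by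
    rw [← Matrix.SpecialLinearGroup.coe_mul, mul_inv_cancel, Matrix.SpecialLinearGroup.coe_one]
  have hYYi : (Y : Matrix (Fin 2) (Fin 2) ℂ) *
      ((Y⁻¹ : Matrix.SpecialLinearGroup (Fin 2) ℂ) : Matrix (Fin 2) (Fin 2) ℂ) = 1 := by
    rw [← Matrix.SpecialLinearGroup.coe_mul, mul_inv_cancel, Matrix.SpecialLinearGroup.coe_one]
  have hAinv1 : A' * Ai' = 1 := by
    rw [hA'def, hAi'def, hkey, hXXi, Matrix.mul_one, hhg]
  have hBinv1 : B' * Bi' = 1 := by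
    rw [hB'def, hBi'def, hkey, hYYi, Matrix.mul_one, hhg]
  have hAim : Ai' = !![a2, -xx; 0, aa] := by
    have hMA : !![a2, -xx; 0, aa] * A' = 1 := by
      rw [hA'm, Matrix.mul_fin_two,
        show (1 : Matrix (Fin 2) (Fin 2) ℂ) = !![1, 0; 0, 1] from Matrix.one_fin_two]
      ext i j
      fin_cases i <;> fin_cases j <;>
        simp only [Matrix.of_apply, Fin.isValue, Matrix.cons_val', Matrix.cons_val_zero, Matrix.cons_val_one, Matrix.head_cons,
          Matrix.empty_val', Matrix.cons_val_fin_one, Matrix.head_fin_const, Fin.zero_eta,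
          Fin.mk_one] <;>
        first
          | linear_combination haa2
          | ring
    calc Ai' = (!![a2, -xx; 0, aa] * A') * Ai' := by rw [hMA, Matrix.one_mul]
      _ = !![a2, -xx; 0, aa] * (A' * Ai') := by rw [Matrix.mul_assoc]
      _ = !![a2, -xx; 0, aa] := by rw [hAinv1, Matrix.mul_one]
  have hBim : Bi' = !![rr, 0; -qq, pp] := by
    have hMB : !![rr, 0; -qq, pp] * B' = 1 := by
      rw [hB'm, Matrix.mul_fin_two,
        show (1 : Matrix (Fin 2) (Fin 2) ℂ) = !![1, 0; 0, 1] from Matrix.one_fin_two]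
      ext i j
      fin_cases i <;> fin_cases j <;>
        simp only [Matrix.of_apply, Fin.isValue, Matrix.cons_val', Matrix.cons_val_zero, Matrix.cons_val_one, Matrix.head_cons,
          Matrix.empty_val', Matrix.cons_val_fin_one, Matrix.head_fin_const, Fin.zero_eta,
          Fin.mk_one] <;>
        first
          | linear_combination hpr
          | ring
    calc Bi' = (!![rr, 0; -qq, pp] * B') * Bi' := by rw [hMB, Matrix.one_mul]
      _ = !![rr, 0; -qq, pp] * (B' * Bi') := by rw [Matrix.mul_assoc]
      _ = !![rr, 0; -qq, pp] := by rw [hBinv1, Matrix.mul_one]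
  -- traces
  have htr : ∀ M : Matrix (Fin 2) (Fin 2) ℂ, (g⁻¹ * M * g).trace = M.trace := by
    intro M
    rw [Matrix.trace_mul_comm, ← Matrix.mul_assoc, hgh, Matrix.one_mul]
  have hα2 : α = aa + a2 := by
    rw [hα, ← htr (X : Matrix (Fin 2) (Fin 2) ℂ), ← hA'def, hA'm, Matrix.trace_fin_two]
    simp
  have hβ2 : β = pp + rr := by
    rw [hβ, ← htr (Y : Matrix (Fin 2) (Fin 2) ℂ), ← hB'def, hB'm, Matrix.trace_fin_two]
    simp
  have hγ2 : γ = a2 * pp + aa * rr - xx * qq := by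
    rw [hγ, Matrix.SpecialLinearGroup.coe_mul,
      ← htr (((X⁻¹ : Matrix.SpecialLinearGroup (Fin 2) ℂ) : Matrix (Fin 2) (Fin 2) ℂ) *
        (Y : Matrix (Fin 2) (Fin 2) ℂ)), ← hkey, ← hAi'def, ← hB'def, hAim, hB'm,
      Matrix.mul_fin_two, Matrix.trace_fin_two]
    simp only [Matrix.of_apply, Fin.isValue, Matrix.cons_val', Matrix.cons_val_zero, Matrix.cons_val_one, Matrix.head_cons,
      Matrix.empty_val', Matrix.cons_val_fin_one, Matrix.head_fin_const]
    ring
  -- the conjugated word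
  have hW'exp : B' * Ai' * B' * A' * Bi' * A' * B' * Ai' * B' = Wc := by
    rw [hA'def, hB'def, hAi'def, hBi'def, hWcdef, hw]
    simp only [Matrix.SpecialLinearGroup.coe_mul, hkey]
  have hcm : A' * Wc = Wc * A' := by
    rw [hA'def, hWcdef, hkey, hkey, ← Matrix.SpecialLinearGroup.coe_mul,
      ← Matrix.SpecialLinearGroup.coe_mul, hcomm]
  rw [← hW'exp, hAim, hBim, hA'm, hB'm] at hcm
  simp only [Matrix.mul_fin_two] at hcm
  rw [← Matrix.ext_iff] at hcm
  have hE := hcm 0 0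
  simp only [Matrix.of_apply, Fin.isValue, Matrix.cons_val', Matrix.cons_val_zero, Matrix.cons_val_one, Matrix.head_cons,
    Matrix.empty_val', Matrix.cons_val_fin_one, Matrix.head_fin_const] at hE
  have hfin : xx * qq *
      (-γ ^ 4 + α * β * γ ^ 3 - (α ^ 2 + β ^ 2 - 3) * γ ^ 2 + α * β * γ - 1) = 0 := by
    rw [hα2, hβ2, hγ2]
    linear_combination hE - ((2*xx^3 * qq^3 - rr^2 * xx^3 * qq^3 - 4*pp * rr * xx * qq - pp * rr * xx^3 * qq^3 - pp^2 * xx^3 * qq^3 + 3*pp^2 * rr^2 * xx * qq - 2*a2 * rr * xx^2 * qq^2 - 4*a2 * pp * xx^2 * qq^2 + 3*a2 * pp * rr^2 * xx^2 * qq^2 + a2 * pp^2 * rr * xx^2 * qq^2 + 2*a2 * pp^3 * xx^2 * qq^2 + 2*a2^2 * pp * rr * xx * qq + 2*a2^2 * pp^2 * xx * qq - 2*a2^2 * pp^2 * rr^2 * xx * qq - a2^2 * pp^4 * xx * qq - 4*aa * rr * xx^2 * qq^2 + 2*aa * rr^3 * xx^2 * qq^2 - 2*aa * pp * xx^2 *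 qq^2 + aa * pp * rr^2 * xx^2 * qq^2 + 3*aa * pp^2 * rr * xx^2 * qq^2 + aa * a2 * rr^2 * xx * qq + 4*aa * a2 * pp * rr * xx * qq - 2*aa * a2 * pp * rr^3 * xx * qq + aa * a2 * pp^2 * xx * qq - aa * a2 * pp^2 * rr^2 * xx * qq - 2*aa * a2 * pp^3 * rr * xx * qq + 2*aa^2 * rr^2 * xx * qq - aa^2 * rr^4 * xx * qq + 2*aa^2 * pp * rr * xx * qq - 2*aa^2 * pp^2 * rr^2 * xx * qq)) * haa2 - ((- xx * qq + xx^3 * qq^3 + 3*pp * rr * xx * qq + a2 * rr * xx^2 * qq^2 - 3*a2 * pp * xx^2 * qq^2 - a2^2 * xx^3 * qq^3 - a2^2 * pp * rr * xx * qq + 2*a2^2 * pp^2 * xx * qq + 2*a2^3 * pp * xx^2 * qq^2 - a2^4 * pp^2 * xx * qq - 3*aa * rr * xx^2 * qq^2 + aa * pp * xx^2 * qq^2 - aa^2 * xx^3 * qq^3 + 2*aa^2 * rr^2 * xx * qq - aa^2 * pp * rr * xx * qq + 2*aa^3 * rr * xx^2 * qq^2 - aa^4 * rr^2 * xx * qq))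 * hpr
  rcases mul_eq_zero.mp hfin with h | h
  · rcases mul_eq_zero.mp h with h' | h'
    · exact absurd h' hxx
    · exact absurd h' hqq
  · exact h
end
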